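/- Let ζ > 0 and define F(ν) = ν² + ζ² − (π/4) (L_{1/2}(−(ν²+ζ²)))², where L_{1/2}(−x) = e^{−x/2}[(1+x)I_0(x/2) + x I_1(x/2)]. Then F has a unique global minimum at ν = 0 over ν ≥ 0; in particular F'(ν) > 0 for ν > 0. -/

import Mathlib

/-- Modified Bessel function of the first kind of order 0, via its power series. -/
noncomputable def besselI0 (x : ℝ) : ℝ :=
  ∑' m : ℕ, (x / 2) ^ (2 * m) / ((Nat.factorial m : ℝ) ^ 2)

/-- Modified Bessel function of the first kind of order 1, via its power series. -/
noncomputable def besselI1 (x : ℝ) : ℝ :=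
  ∑' m : ℕ, (x / 2) ^ (2 * m + 1) / ((Nat.factorial m : ℝ) * (Nat.factorial (m + 1) : ℝ))

/-- x ↦ L_{1/2}(−x) = e^{−x/2}[(1+x)I_0(x/2) + x I_1(x/2)]. -/
noncomputable def LhalfNeg (x : ℝ) : ℝ :=
  Real.exp (-x / 2) * ((1 + x) * besselI0 (x / 2) + x * besselI1 (x / 2))

/-- F(ν) = ν² + ζ² − (π/4) (L_{1/2}(−(ν²+ζ²)))². -/
noncomputable def Ffun (ζ ν : ℝ) : ℝ :=
  ν ^ 2 + ζ ^ 2 - Real.pi / 4 * (LhalfNeg (ν ^ 2 + ζ ^ 2)) ^ 2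

open Filter Finset Nat

set_option maxHeartbeats 1600000

noncomputable def bseq (m : ℕ) : ℝ := (4*m+1) * ((2*m).choose m : ℝ)^2 / 16^m

lemma cast_choose_two_mul (m : ℕ) : ((2*m).choose m : ℝ) = (2*m)! / ((m)! * (m)!) := by
  rw [Nat.cast_choose ℝ (by omega : m ≤ 2*m)]
  have h : 2*m - m = m := by omega
  rw [h]

lemma bseq_eq_W (m : ℕ) : bseq m = ((4*(m:ℝ)+1)/(2*m+1)) / Real.Wallis.W m := by
  rw [Real.Wallis.W_eq_factorial_ratio, bseq, cast_choose_two_mul]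
  have h1 : (0:ℝ) < ((2*m)! : ℝ) := by positivity
  have h2 : (0:ℝ) < ((m)! : ℝ) := by positivity
  have h3 : (0:ℝ) < 2*(m:ℝ)+1 := by positivity
  have h16 : (16:ℝ)^m = 2^(4*m) := by
    rw [pow_mul]; norm_num
  rw [h16]
  field_simp

lemma tendsto_aux : Tendsto (fun m : ℕ => ((4*(m:ℝ)+1)/(2*m+1))) atTop (nhds 2) := by
  have h0 : Tendsto (fun m : ℕ => 2*(m:ℝ)+1) atTop atTop := by
    apply tendsto_atTop_add_const_right
    exact (tendsto_natCast_atTop_atTop (R := ℝ)).const_mul_atTop (by norm_num)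
  have h1 : Tendsto (fun m : ℕ => 1/(2*(m:ℝ)+1)) atTop (nhds 0) := by
    simpa [Function.comp_def] using tendsto_inv_atTop_zero.comp h0
  have h2 : Tendsto (fun m : ℕ => 2 - 1/(2*(m:ℝ)+1)) atTop (nhds 2) := by
    simpa using (tendsto_const_nhds (x := (2:ℝ)) (f := atTop)).sub h1
  refine h2.congr (fun m => ?_)
  have h3 : 2*(m:ℝ)+1 ≠ 0 := by positivity
  field_simp
  ring

lemma bseq_tendsto : Tendsto bseq atTop (nhds (4/Real.pi)) := by
  have h := tendsto_aux.div Real.Wallis.tendsto_W_nhds_pi_div_two (by positivity)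
  have : (2 : ℝ) / (Real.pi/2) = 4/Real.pi := by
    rw [div_div_eq_mul_div, eq_div_iff Real.pi_ne_zero]
    field_simp
    norm_num
  rw [this] at h
  exact h.congr (fun m => (bseq_eq_W m).symm)

lemma bseq_mono : Monotone bseq := by
  apply monotone_nat_of_le_succ
  intro m
  have key : ((2*(m+1)).choose (m+1) : ℝ) * ((m:ℝ)+1) = ((2*m).choose m : ℝ) * (2*(m:ℝ)+1) * 2 := by
    have h1 : (2*m+1) * (2*m).choose m = (2*m+1).choose (m+1) * (m+1) := Nat.add_one_mul_choose_eq (2*m) m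
    have h2 : (2*m+2) * (2*m+1).choose m = (2*m+2).choose (m+1) * (m+1) := Nat.add_one_mul_choose_eq (2*m+1) m
    have h3 : (2*m+1).choose (m+1) = (2*m+1).choose m := by
      rw [← Nat.choose_symm (by omega)]
      congr 1
      omega
    have h4 : (2*(m+1)).choose (m+1) * ((m+1)*(m+1)) = (2*m).choose m * ((2*m+1) * (2*m+2)) := by
      have e : 2*(m+1) = 2*m+2 := by ring
      rw [e]
      calc (2*m+2).choose (m+1) * ((m+1)*(m+1)) = ((2*m+2).choose (m+1) * (m+1)) * (m+1) := by ring
        _ = ((2*m+2) * (2*m+1).choose m) * (m+1) := by rw [h2]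
        _ = (2*m+2) * ((2*m+1).choose (m+1) * (m+1)) := by rw [h3]; ring
        _ = (2*m+2) * ((2*m+1) * (2*m).choose m) := by rw [h1]
        _ = (2*m).choose m * ((2*m+1) * (2*m+2)) := by ring
    have h4' : (((2*(m+1)).choose (m+1) : ℝ)) * (((m:ℝ)+1)*((m:ℝ)+1)) = ((2*m).choose m : ℝ) * ((2*(m:ℝ)+1) * (2*(m:ℝ)+2)) := by
      exact_mod_cast congrArg (Nat.cast (R := ℝ)) h4
    have hm1 : ((m:ℝ)+1) ≠ 0 := by positivity
    field_simp at h4' ⊢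
    nlinarith [h4']
  -- now prove bseq m ≤ bseq (m+1)
  have hc : (0:ℝ) < ((2*m).choose m : ℝ) := by
    exact_mod_cast Nat.choose_pos (by omega)
  have hm1 : (0:ℝ) < (m:ℝ)+1 := by positivity
  have hq : ((2*(m+1)).choose (m+1) : ℝ) = ((2*m).choose m : ℝ) * (2*(2*(m:ℝ)+1)/((m:ℝ)+1)) := by
    field_simp
    nlinarith [key]
  simp only [bseq, hq]
  push_cast
  rw [div_le_div_iff₀ (by positivity) (by positivity)]
  have h16 : (16:ℝ)^(m+1) = 16^m * 16 := by ring
  rw [h16]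
  have expand : (4*((m:ℝ)+1)+1) * (((2*m).choose m : ℝ) * (2*(2*(m:ℝ)+1)/((m:ℝ)+1)))^2 
      = (4*(m:ℝ)+5) * ((2*m).choose m : ℝ)^2 * (4*(2*(m:ℝ)+1)^2/((m:ℝ)+1)^2) := by
    field_simp
    ring
  rw [expand]
  have h16pos : (0:ℝ) < 16^m := by positivity
  rw [show (4*(m:ℝ)+5) * ((2*m).choose m : ℝ)^2 * (4*(2*(m:ℝ)+1)^2/((m:ℝ)+1)^2) * 16^m 
      = ((4*(m:ℝ)+5) * (4*(2*(m:ℝ)+1)^2/((m:ℝ)+1)^2)) * (((2*m).choose m : ℝ)^2 * 16^m) from by ring,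
     show (4*(m:ℝ)+1) * ((2*m).choose m : ℝ)^2 * (16^m*16) = ((4*(m:ℝ)+1)*16) * (((2*m).choose m : ℝ)^2 * 16^m) from by ring]
  apply mul_le_mul_of_nonneg_right _ (by positivity)
  rw [show (4*(m:ℝ)+5) * (4*(2*(m:ℝ)+1)^2/((m:ℝ)+1)^2) = ((4*(m:ℝ)+5) * (4*(2*(m:ℝ)+1)^2))/((m:ℝ)+1)^2 from by ring,
     le_div_iff₀ (by positivity)]
  nlinarith [sq_nonneg ((m:ℝ))]


lemma bseq_le (m : ℕ) : bseq m ≤ 4/Real.pi := bseq_mono.ge_of_tendsto bseq_tendsto m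

lemma one_lt_four_div_pi : (1:ℝ) < 4/Real.pi := by
  rw [lt_div_iff₀ Real.pi_pos]
  nlinarith [Real.pi_lt_d2]

lemma one_le_fact (m : ℕ) : (1:ℝ) ≤ ((m)! : ℝ) := by
  exact_mod_cast Nat.one_le_iff_ne_zero.mpr (Nat.factorial_ne_zero m)

lemma summable_I0_abs (x : ℝ) :
    Summable (fun m : ℕ => |(x / 2) ^ (2 * m) / ((m)! : ℝ) ^ 2|) := by
  refine Summable.of_nonneg_of_le (fun m => abs_nonneg _) (fun m => ?_)
    (Real.summable_pow_div_factorial (x^2/4))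
  have h0 : (0:ℝ) < ((m)! : ℝ) := by positivity
  rw [abs_div, abs_pow, pow_mul, sq_abs, show (x/2)^2 = x^2/4 from by ring,
    abs_of_nonneg (by positivity : (0:ℝ) ≤ ((m)! : ℝ)^2)]
  gcongr
  nlinarith [one_le_fact m]

lemma summable_I0 (x : ℝ) :
    Summable (fun m : ℕ => (x / 2) ^ (2 * m) / ((m)! : ℝ) ^ 2) :=
  (summable_I0_abs x).of_abs

lemma summable_I1_abs (x : ℝ) :
    Summable (fun m : ℕ => |(x / 2) ^ (2 * m + 1) / (((m)! : ℝ) * ((m+1)! : ℝ))|) := by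
  refine Summable.of_nonneg_of_le (fun m => abs_nonneg _) (fun m => ?_)
    ((Real.summable_pow_div_factorial (x^2/4)).mul_left (|x/2|))
  have h0 : (0:ℝ) < ((m)! : ℝ) := by positivity
  have h1 : (0:ℝ) < ((m+1)! : ℝ) := by positivity
  rw [abs_div, show (x/2)^(2*m+1) = (x/2)^(2*m)*(x/2) from pow_succ _ _, abs_mul, abs_pow,
    pow_mul, sq_abs, show (x/2)^2 = x^2/4 from by ring,
    abs_of_nonneg (by positivity : (0:ℝ) ≤ ((m)! : ℝ) * ((m+1)! : ℝ)),
    show |x/2| * ((x^2/4)^m / ((m)!:ℝ)) = ((x^2/4)^m * |x/2|)/((m)!:ℝ) from by ring]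
  gcongr
  nlinarith [one_le_fact (m+1)]

lemma summable_I1 (x : ℝ) :
    Summable (fun m : ℕ => (x / 2) ^ (2 * m + 1) / (((m)! : ℝ) * ((m+1)! : ℝ))) :=
  (summable_I1_abs x).of_abs

lemma cast_choose_antidiag {k i j : ℕ} (h : i + j = k) :
    ((k.choose i : ℝ)) = (k)! / ((i)! * (j)!) := by
  rw [Nat.cast_choose ℝ (by omega : i ≤ k)]
  have hj : k - i = j := by omega
  rw [hj]

lemma vander0 (k : ℕ) :
    ∑ ij ∈ antidiagonal k, (1:ℝ)/((((ij.1))! : ℝ)^2 * (((ij.2))! : ℝ)^2)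
      = ((2*k).choose k : ℝ)/((k)! : ℝ)^2 := by
  have hv : ((2*k).choose k : ℝ) = ∑ ij ∈ antidiagonal k, (k.choose ij.1 : ℝ) * (k.choose ij.2 : ℝ) := by
    rw [show 2*k = k + k from by ring, Nat.add_choose_eq]
    push_cast
    rfl
  rw [hv, Finset.sum_div]
  apply Finset.sum_congr rfl
  intro ij hij
  rw [Finset.HasAntidiagonal.mem_antidiagonal] at hij
  rw [cast_choose_antidiag hij, cast_choose_antidiag (by omega : ij.2 + ij.1 = k)]
  have h1 : ((ij.1)! : ℝ) ≠ 0 := by positivity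
  have h2 : ((ij.2)! : ℝ) ≠ 0 := by positivity
  have h3 : ((k)! : ℝ) ≠ 0 := by positivity
  field_simp

lemma vander1 (k : ℕ) :
    ∑ ij ∈ antidiagonal k, (1:ℝ)/((((ij.1))! : ℝ)^2 * ((((ij.2))! : ℝ) * (((ij.2)+1)! : ℝ)))
      = ((2*k+1).choose k : ℝ)/(((k)! : ℝ) * ((k+1)! : ℝ)) := by
  have hv : ((2*k+1).choose k : ℝ) = ∑ ij ∈ antidiagonal k, ((k+1).choose ij.1 : ℝ) * (k.choose ij.2 : ℝ) := by
    rw [show 2*k+1 = (k+1) + k from by ring, Nat.add_choose_eq]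
    push_cast
    rfl
  rw [hv, Finset.sum_div]
  apply Finset.sum_congr rfl
  intro ij hij
  rw [Finset.HasAntidiagonal.mem_antidiagonal] at hij
  -- (k+1).choose ij.1 with ij.1 + (ij.2+1) = k+1
  rw [cast_choose_antidiag (show ij.1 + (ij.2+1) = k+1 by omega),
      cast_choose_antidiag (show ij.2 + ij.1 = k by omega)]
  have h1 : ((ij.1)! : ℝ) ≠ 0 := by positivity
  have h2 : ((ij.2)! : ℝ) ≠ 0 := by positivity
  have h2' : (((ij.2)+1)! : ℝ) ≠ 0 := by positivity
  have h3 : ((k)! : ℝ) ≠ 0 := by positivity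
  have h4 : ((k+1)! : ℝ) ≠ 0 := by positivity
  field_simp

lemma vander2 (k : ℕ) :
    ∑ ij ∈ antidiagonal k, (1:ℝ)/(((((ij.1))! : ℝ) * (((ij.1)+1)! : ℝ)) * ((((ij.2))! : ℝ) * (((ij.2)+1)! : ℝ)))
      = ((2*k+2).choose k : ℝ)/(((k+1)! : ℝ)^2) := by
  have hv : ((2*k+2).choose k : ℝ) = ∑ ij ∈ antidiagonal k, ((k+1).choose ij.1 : ℝ) * ((k+1).choose ij.2 : ℝ) := by
    rw [show 2*k+2 = (k+1) + (k+1) from by ring, Nat.add_choose_eq]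
    push_cast
    rfl
  rw [hv, Finset.sum_div]
  apply Finset.sum_congr rfl
  intro ij hij
  rw [Finset.HasAntidiagonal.mem_antidiagonal] at hij
  rw [cast_choose_antidiag (show ij.1 + (ij.2+1) = k+1 by omega),
      cast_choose_antidiag (show ij.2 + (ij.1+1) = k+1 by omega)]
  have h1 : ((ij.1)! : ℝ) ≠ 0 := by positivity
  have h1' : (((ij.1)+1)! : ℝ) ≠ 0 := by positivity
  have h2 : ((ij.2)! : ℝ) ≠ 0 := by positivity
  have h2' : (((ij.2)+1)! : ℝ) ≠ 0 := by positivity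
  have h4 : ((k+1)! : ℝ) ≠ 0 := by positivity
  field_simp

lemma I0_mul_I0 (x : ℝ) : besselI0 x * besselI0 x
    = ∑' k : ℕ, ((2*k).choose k : ℝ)/((k)! : ℝ)^2 * (x/2)^(2*k) := by
  have hs : Summable (fun m : ℕ => ‖(x/2)^(2*m)/((m)! : ℝ)^2‖) := by
    simpa only [Real.norm_eq_abs] using summable_I0_abs x
  rw [besselI0, tsum_mul_tsum_eq_tsum_sum_antidiagonal_of_summable_norm hs hs]
  refine tsum_congr fun k => ?_
  rw [show ((2*k).choose k : ℝ)/((k)! : ℝ)^2 * (x/2)^(2*k)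
      = (x/2)^(2*k) * (((2*k).choose k : ℝ)/((k)! : ℝ)^2) from by ring,
    ← vander0 k, Finset.mul_sum]
  refine Finset.sum_congr rfl fun ij hij => ?_
  rw [Finset.HasAntidiagonal.mem_antidiagonal] at hij
  have hp : (x/2)^(2*ij.1) * (x/2)^(2*ij.2) = (x/2)^(2*k) := by
    rw [← pow_add]; congr 1; omega
  rw [← hp]; ring

lemma I0_mul_I1 (x : ℝ) : besselI0 x * besselI1 x
    = ∑' k : ℕ, ((2*k+1).choose k : ℝ)/(((k)! : ℝ) * ((k+1)! : ℝ)) * (x/2)^(2*k+1) := by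
  have hs : Summable (fun m : ℕ => ‖(x/2)^(2*m)/((m)! : ℝ)^2‖) := by
    simpa only [Real.norm_eq_abs] using summable_I0_abs x
  have hs1 : Summable (fun m : ℕ => ‖(x/2)^(2*m+1)/(((m)! : ℝ) * ((m+1)! : ℝ))‖) := by
    simpa only [Real.norm_eq_abs] using summable_I1_abs x
  rw [besselI0, besselI1, tsum_mul_tsum_eq_tsum_sum_antidiagonal_of_summable_norm hs hs1]
  refine tsum_congr fun k => ?_
  rw [show ((2*k+1).choose k : ℝ)/(((k)! : ℝ) * ((k+1)! : ℝ)) * (x/2)^(2*k+1)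
      = (x/2)^(2*k+1) * (((2*k+1).choose k : ℝ)/(((k)! : ℝ) * ((k+1)! : ℝ))) from by ring,
    ← vander1 k, Finset.mul_sum]
  refine Finset.sum_congr rfl fun ij hij => ?_
  rw [Finset.HasAntidiagonal.mem_antidiagonal] at hij
  have hp : (x/2)^(2*ij.1) * (x/2)^(2*ij.2+1) = (x/2)^(2*k+1) := by
    rw [← pow_add]; congr 1; omega
  rw [← hp]; ring

lemma I1_mul_I1 (x : ℝ) : besselI1 x * besselI1 x
    = ∑' k : ℕ, ((2*k+2).choose k : ℝ)/(((k+1)! : ℝ)^2) * (x/2)^(2*k+2) := by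
  have hs1 : Summable (fun m : ℕ => ‖(x/2)^(2*m+1)/(((m)! : ℝ) * ((m+1)! : ℝ))‖) := by
    simpa only [Real.norm_eq_abs] using summable_I1_abs x
  rw [besselI1, tsum_mul_tsum_eq_tsum_sum_antidiagonal_of_summable_norm hs1 hs1]
  refine tsum_congr fun k => ?_
  rw [show ((2*k+2).choose k : ℝ)/(((k+1)! : ℝ)^2) * (x/2)^(2*k+2)
      = (x/2)^(2*k+2) * (((2*k+2).choose k : ℝ)/(((k+1)! : ℝ)^2)) from by ring,
    ← vander2 k, Finset.mul_sum]
  refine Finset.sum_congr rfl fun ij hij => ?_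
  rw [Finset.HasAntidiagonal.mem_antidiagonal] at hij
  have hp : (x/2)^(2*ij.1+1) * (x/2)^(2*ij.2+1) = (x/2)^(2*k+2) := by
    rw [← pow_add]; congr 1; omega
  rw [← hp]; ring

noncomputable def Acoef (k : ℕ) : ℝ := ((2*k).choose k : ℝ)/((k)! : ℝ)^2
noncomputable def Bcoef (k : ℕ) : ℝ := ((2*k+1).choose k : ℝ)/(((k)! : ℝ) * ((k+1)! : ℝ))
noncomputable def Ccoef (k : ℕ) : ℝ := ((2*k+2).choose k : ℝ)/(((k+1)! : ℝ)^2)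

noncomputable def Ecoef : ℕ → ℝ
  | 0 => 1
  | (k+1) => Acoef (k+1) + 8 * Bcoef k

noncomputable def Ocoef : ℕ → ℝ
  | 0 => Bcoef 0 + 4 * Acoef 0
  | (k+1) => Bcoef (k+1) + 4 * Acoef (k+1) + 4 * Ccoef k

lemma cast_choose_antidiag' {k i j : ℕ} (h : i + j = k) :
    ((k.choose i : ℝ)) = (k)! / ((i)! * (j)!) := by
  rw [Nat.cast_choose ℝ (by omega : i ≤ k)]
  have hj : k - i = j := by omega
  rw [hj]

lemma fact_succ_cast (n : ℕ) : ((n+1)! : ℝ) = ((n:ℝ)+1) * ((n)! : ℝ) := by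
  rw [Nat.factorial_succ]; push_cast; ring

lemma Ecoef_eq (k : ℕ) : Ecoef (k+1) = bseq (k+1) * 16^(k+1) / ((2*(k+1))! : ℝ) := by
  show Acoef (k+1) + 8 * Bcoef k = _
  rw [Acoef, Bcoef, bseq]
  have h1 : 2*(k+1) = (2*k+1)+1 := by ring
  rw [h1, cast_choose_antidiag' (show (k+1) + (k+1) = 2*k+1+1 by ring),
      cast_choose_antidiag' (show k + (k+1) = 2*k+1 by ring),
      fact_succ_cast (2*k+1), fact_succ_cast k]
  have hF : ((2*k+1)! : ℝ) ≠ 0 := by positivity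
  have hk : ((k)! : ℝ) ≠ 0 := by positivity
  have h16 : (16:ℝ)^(k+1) ≠ 0 := by positivity
  push_cast
  field_simp
  ring

lemma Ocoef_eq (k : ℕ) : Ocoef k = bseq (k+1) * 4^(2*k+1) / ((2*k+1)! : ℝ) := by
  cases k with
  | zero =>
    show Bcoef 0 + 4 * Acoef 0 = _
    rw [Bcoef, Acoef, bseq]
    norm_num [Nat.factorial]
  | succ k =>
    show Bcoef (k+1) + 4 * Acoef (k+1) + 4 * Ccoef k = _
    rw [Bcoef, Acoef, Ccoef, bseq]
    have e1 : 2*(k+1)+1 = (2*k+2)+1 := by ring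
    have e2 : 2*(k+1) = (2*k+1)+1 := by ring
    have e3 : 2*(k+2) = ((2*k+2)+1)+1 := by ring
    rw [e1, e2,
      cast_choose_antidiag' (show (k+1) + (k+2) = 2*k+2+1 by ring),
      cast_choose_antidiag' (show (k+1) + (k+1) = 2*k+1+1 by ring),
      cast_choose_antidiag' (show k + (k+2) = 2*k+2 by ring),
      e3,
      cast_choose_antidiag' (show (k+2) + (k+2) = 2*k+2+1+1 by ring)]
    rw [fact_succ_cast (2*k+2+1), fact_succ_cast (2*k+2), fact_succ_cast (2*k+1),
        fact_succ_cast (k+1), fact_succ_cast k]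
    have hF : ((2*k+1)! : ℝ) ≠ 0 := by positivity
    have hk : ((k)! : ℝ) ≠ 0 := by positivity
    have hk2 : ((k+2)! : ℝ) ≠ 0 := by positivity
    rw [show ((16:ℝ))^(k+1+1) = 4^(2*k+2+2) from by
      rw [show (16:ℝ) = 4^2 by norm_num, ← pow_mul]; norm_num; omega]
    push_cast
    field_simp
    ring


lemma I0_mul_I0' (x : ℝ) : besselI0 x * besselI0 x = ∑' k : ℕ, Acoef k * (x/2)^(2*k) := by
  simp only [Acoef]
  exact I0_mul_I0 x

lemma I0_mul_I1' (x : ℝ) : besselI0 x * besselI1 x = ∑' k : ℕ, Bcoef k * (x/2)^(2*k+1) := by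
  simp only [Bcoef]
  exact I0_mul_I1 x

lemma I1_mul_I1' (x : ℝ) : besselI1 x * besselI1 x = ∑' k : ℕ, Ccoef k * (x/2)^(2*k+2) := by
  simp only [Ccoef]
  exact I1_mul_I1 x

-- choose ≤ 2^n
lemma choose_le_two_pow (n k : ℕ) : n.choose k ≤ 2^n := by
  rcases le_or_gt k n with h|h
  · calc n.choose k ≤ ∑ i ∈ range (n+1), n.choose i :=
        Finset.single_le_sum (f := fun i => n.choose i) (fun _ _ => Nat.zero_le _)
          (Finset.mem_range.mpr (by omega))
      _ = 2^n := Nat.sum_range_choose n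
  · simp [Nat.choose_eq_zero_of_lt h]

lemma Acoef_nonneg (k : ℕ) : 0 ≤ Acoef k := by
  unfold Acoef; positivity
lemma Bcoef_nonneg (k : ℕ) : 0 ≤ Bcoef k := by
  unfold Bcoef; positivity
lemma Ccoef_nonneg (k : ℕ) : 0 ≤ Ccoef k := by
  unfold Ccoef; positivity
lemma Ecoef_nonneg (k : ℕ) : 0 ≤ Ecoef k := by
  cases k with
  | zero => norm_num [Ecoef]
  | succ k => 
    have := Acoef_nonneg (k+1); have := Bcoef_nonneg k
    show 0 ≤ Acoef (k+1) + 8 * Bcoef k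
    linarith
lemma Ocoef_nonneg (k : ℕ) : 0 ≤ Ocoef k := by
  cases k with
  | zero =>
    have := Acoef_nonneg 0; have := Bcoef_nonneg 0
    show 0 ≤ Bcoef 0 + 4 * Acoef 0
    linarith
  | succ k =>
    have := Acoef_nonneg (k+1); have := Bcoef_nonneg (k+1); have := Ccoef_nonneg k
    show 0 ≤ Bcoef (k+1) + 4 * Acoef (k+1) + 4 * Ccoef k
    linarith

lemma Acoef_le (k : ℕ) : Acoef k ≤ 4^k / ((k)! : ℝ) := by
  unfold Acoef
  have h1 : ((2*k).choose k : ℝ) ≤ 4^k := by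
    calc ((2*k).choose k : ℝ) ≤ ((2^(2*k) : ℕ) : ℝ) := by
          exact_mod_cast _root_.choose_le_two_pow (2*k) k
      _ = 4^k := by push_cast; rw [pow_mul]; norm_num
  calc ((2*k).choose k : ℝ)/((k)! : ℝ)^2 ≤ 4^k/((k)! : ℝ)^2 := by
        gcongr
    _ ≤ 4^k/((k)! : ℝ) := by gcongr; nlinarith [one_le_fact k]

lemma Bcoef_le (k : ℕ) : Bcoef k ≤ 2 * 4^k / ((k)! : ℝ) := by
  unfold Bcoef
  have h1 : ((2*k+1).choose k : ℝ) ≤ 2 * 4^k := by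
    calc ((2*k+1).choose k : ℝ) ≤ ((2^(2*k+1) : ℕ) : ℝ) := by
          exact_mod_cast _root_.choose_le_two_pow (2*k+1) k
      _ = 2 * 4^k := by push_cast; rw [pow_add, pow_mul]; norm_num [mul_comm]
  calc ((2*k+1).choose k : ℝ)/(((k)! : ℝ) * ((k+1)! : ℝ)) ≤ (2*4^k)/(((k)! : ℝ) * ((k+1)! : ℝ)) := by
        gcongr
    _ ≤ (2*4^k)/((k)! : ℝ) := by gcongr; nlinarith [one_le_fact k, one_le_fact (k+1)]

lemma Ccoef_le (k : ℕ) : Ccoef k ≤ 4 * 4^k / ((k)! : ℝ) := by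
  unfold Ccoef
  have h1 : ((2*k+2).choose k : ℝ) ≤ 4 * 4^k := by
    calc ((2*k+2).choose k : ℝ) ≤ ((2^(2*k+2) : ℕ) : ℝ) := by
          exact_mod_cast _root_.choose_le_two_pow (2*k+2) k
      _ = 4 * 4^k := by push_cast; rw [pow_add, pow_mul]; norm_num [mul_comm]
  have hk1 : ((k)! : ℝ) ≤ ((k+1)! : ℝ) := by
    exact_mod_cast Nat.factorial_le (by omega : k ≤ k+1)
  have h2 : ((k)! : ℝ) ≤ ((k+1)! : ℝ)^2 := by nlinarith [one_le_fact (k+1), one_le_fact k]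
  calc ((2*k+2).choose k : ℝ)/((k+1)! : ℝ)^2 ≤ (4*4^k)/((k+1)! : ℝ)^2 := by gcongr
    _ ≤ (4*4^k)/((k)! : ℝ) := by gcongr

lemma summable_A (x : ℝ) : Summable (fun k : ℕ => Acoef k * (x/2)^(2*k)) := by
  apply Summable.of_abs
  refine Summable.of_nonneg_of_le (fun k => abs_nonneg _) (fun k => ?_)
    (Real.summable_pow_div_factorial (x^2))
  rw [abs_mul, abs_of_nonneg (Acoef_nonneg k), abs_pow, pow_mul, sq_abs,
    show (x/2)^2 = x^2/4 from by ring]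
  calc Acoef k * (x^2/4)^k ≤ (4^k/((k)! : ℝ)) * (x^2/4)^k :=
        mul_le_mul_of_nonneg_right (Acoef_le k) (by positivity)
    _ = (x^2)^k / ((k)! : ℝ) := by
        rw [div_mul_eq_mul_div, ← mul_pow, show (4:ℝ)*(x^2/4) = x^2 from by ring]

lemma summable_B (x : ℝ) : Summable (fun k : ℕ => Bcoef k * (x/2)^(2*k+1)) := by
  apply Summable.of_abs
  refine Summable.of_nonneg_of_le (fun k => abs_nonneg _) (fun k => ?_)
    ((Real.summable_pow_div_factorial (x^2)).mul_left (2*|x/2|))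
  rw [abs_mul, abs_of_nonneg (Bcoef_nonneg k), abs_pow,
    show 2*k+1 = 2*k+1 from rfl, pow_succ, pow_mul, sq_abs,
    show (x/2)^2 = x^2/4 from by ring]
  calc Bcoef k * ((x^2/4)^k * |x/2|) ≤ (2*4^k/((k)! : ℝ)) * ((x^2/4)^k * |x/2|) :=
        mul_le_mul_of_nonneg_right (Bcoef_le k) (by positivity)
    _ = 2*|x/2| * ((x^2)^k / ((k)! : ℝ)) := by
        rw [div_mul_eq_mul_div]
        rw [show (2*4^k) * ((x^2/4)^k * |x/2|) = 2*|x/2| * (4^k*(x^2/4)^k) from by ring, ← mul_pow]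
        norm_num
        ring

lemma summable_C (x : ℝ) : Summable (fun k : ℕ => Ccoef k * (x/2)^(2*k+2)) := by
  apply Summable.of_abs
  refine Summable.of_nonneg_of_le (fun k => abs_nonneg _) (fun k => ?_)
    ((Real.summable_pow_div_factorial (x^2)).mul_left (x^2))
  rw [abs_mul, abs_of_nonneg (Ccoef_nonneg k), abs_pow,
    show 2*k+2 = 2*(k+1) from by ring, pow_mul, sq_abs,
    show (x/2)^2 = x^2/4 from by ring, pow_succ]
  calc Ccoef k * ((x^2/4)^k * (x^2/4)) ≤ (4*4^k/((k)! : ℝ)) * ((x^2/4)^k * (x^2/4)) :=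
        mul_le_mul_of_nonneg_right (Ccoef_le k) (by positivity)
    _ = x^2 * ((x^2)^k / ((k)! : ℝ)) := by
        rw [div_mul_eq_mul_div]
        rw [show (4*4^k) * ((x^2/4)^k * (x^2/4)) = (4*(x^2/4)) * (4^k*(x^2/4)^k) from by ring, ← mul_pow]
        norm_num
        ring

lemma pi_le_four : Real.pi ≤ 4 := by
  nlinarith [Real.pi_lt_d2]

lemma four_div_pi_le_two : 4/Real.pi ≤ 2 := by
  rw [div_le_iff₀ Real.pi_pos]
  nlinarith [Real.pi_gt_three]

lemma Ecoef_le_pi (k : ℕ) : Ecoef k ≤ (4/Real.pi) * 16^k / ((2*k)! : ℝ) := by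
  cases k with
  | zero => simpa [Ecoef] using one_lt_four_div_pi.le
  | succ k =>
    rw [Ecoef_eq k]
    gcongr
    exact bseq_le (k+1)

lemma Ocoef_le_pi (k : ℕ) : Ocoef k ≤ (4/Real.pi) * 4^(2*k+1) / ((2*k+1)! : ℝ) := by
  rw [Ocoef_eq k]
  gcongr
  exact bseq_le (k+1)

lemma summable_E (x : ℝ) : Summable (fun k : ℕ => Ecoef k * (x/2)^(2*k)) := by
  apply Summable.of_abs
  refine Summable.of_nonneg_of_le (fun k => abs_nonneg _) (fun k => ?_)
    ((Real.summable_pow_div_factorial (4*x^2)).mul_left 2)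
  rw [abs_mul, abs_of_nonneg (Ecoef_nonneg k), abs_pow, pow_mul, sq_abs,
    show (x/2)^2 = x^2/4 from by ring]
  have h1 : Ecoef k ≤ 2 * 16^k / ((2*k)! : ℝ) := by
    refine (Ecoef_le_pi k).trans ?_
    gcongr
    exact four_div_pi_le_two
  have h2 : ((k)! : ℝ) ≤ ((2*k)! : ℝ) := by
    exact_mod_cast Nat.factorial_le (by omega : k ≤ 2*k)
  calc Ecoef k * (x^2/4)^k ≤ (2 * 16^k / ((2*k)! : ℝ)) * (x^2/4)^k :=
        mul_le_mul_of_nonneg_right h1 (by positivity)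
    _ ≤ (2 * 16^k / ((k)! : ℝ)) * (x^2/4)^k := by gcongr
    _ = 2 * ((4*x^2)^k / ((k)! : ℝ)) := by
        rw [show (2 * 16^k / ((k)! : ℝ)) * (x^2/4)^k = 2 * ((16^k*(x^2/4)^k) / ((k)! : ℝ)) from by ring,
          ← mul_pow]
        norm_num
        ring_nf

lemma summable_O (x : ℝ) : Summable (fun k : ℕ => Ocoef k * (x/2)^(2*k+1)) := by
  apply Summable.of_abs
  refine Summable.of_nonneg_of_le (fun k => abs_nonneg _) (fun k => ?_)
    ((Real.summable_pow_div_factorial (4*x^2)).mul_left (4*|x|))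
  rw [abs_mul, abs_of_nonneg (Ocoef_nonneg k), abs_pow, pow_succ, pow_mul, sq_abs,
    show (x/2)^2 = x^2/4 from by ring]
  have h1 : Ocoef k ≤ 2 * 4^(2*k+1) / ((2*k+1)! : ℝ) := by
    refine (Ocoef_le_pi k).trans ?_
    gcongr
    exact four_div_pi_le_two
  have h2 : ((k)! : ℝ) ≤ ((2*k+1)! : ℝ) := by
    exact_mod_cast Nat.factorial_le (by omega : k ≤ 2*k+1)
  calc Ocoef k * ((x^2/4)^k * |x/2|) ≤ (2 * 4^(2*k+1) / ((2*k+1)! : ℝ)) * ((x^2/4)^k * |x/2|) :=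
        mul_le_mul_of_nonneg_right h1 (by positivity)
    _ ≤ (2 * 4^(2*k+1) / ((k)! : ℝ)) * ((x^2/4)^k * |x/2|) := by gcongr
    _ = 4*|x| * ((4*x^2)^k / ((k)! : ℝ)) := by
        rw [show (2 * 4^(2*k+1) / ((k)! : ℝ)) * ((x^2/4)^k * |x/2|) 
            = (2*4*|x/2|) * ((4^(2*k)*(x^2/4)^k) / ((k)! : ℝ)) from by rw [pow_succ]; ring,
          show (4:ℝ)^(2*k) = 16^k from by rw [pow_mul]; norm_num, ← mul_pow]
        rw [show |x/2| = |x|/2 from by rw [abs_div]; norm_num]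
        norm_num
        ring_nf

lemma even_part_eq (x : ℝ) :
    besselI0 x * besselI0 x + 4*x*(besselI0 x * besselI1 x)
      = ∑' k : ℕ, Ecoef k * (x/2)^(2*k) := by
  rw [I0_mul_I0', I0_mul_I1']
  have hA' : Summable (fun k : ℕ => Acoef (k+1) * (x/2)^(2*(k+1))) :=
    (summable_nat_add_iff (f := fun k : ℕ => Acoef k * (x/2)^(2*k)) 1).mpr (summable_A x)
  have hB' : Summable (fun k : ℕ => 8 * Bcoef k * (x/2)^(2*(k+1))) :=
    ((summable_B x).mul_left (4*x)).congr (fun k => by ring)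
  have h1 : 4*x*(∑' k : ℕ, Bcoef k * (x/2)^(2*k+1)) = ∑' k : ℕ, 8 * Bcoef k * (x/2)^(2*(k+1)) := by
    rw [← tsum_mul_left]
    exact tsum_congr fun k => by ring
  rw [h1, Summable.tsum_eq_zero_add (summable_E x), Summable.tsum_eq_zero_add (summable_A x)]
  have h2 : ∑' k : ℕ, Ecoef (k+1) * (x/2)^(2*(k+1))
      = (∑' k : ℕ, Acoef (k+1) * (x/2)^(2*(k+1))) + ∑' k : ℕ, 8 * Bcoef k * (x/2)^(2*(k+1)) := by
    rw [← Summable.tsum_add hA' hB']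
    refine tsum_congr fun k => ?_
    show (Acoef (k+1) + 8 * Bcoef k) * _ = _
    ring
  rw [h2]
  have hA0 : Acoef 0 = 1 := by norm_num [Acoef]
  have hE0 : Ecoef 0 = 1 := rfl
  rw [hA0, hE0]
  ring

lemma odd_part_eq (x : ℝ) :
    besselI0 x * besselI1 x + 2*x*(besselI0 x * besselI0 x) + 2*x*(besselI1 x * besselI1 x)
      = ∑' k : ℕ, Ocoef k * (x/2)^(2*k+1) := by
  rw [I0_mul_I0', I0_mul_I1', I1_mul_I1']
  have hB' : Summable (fun k : ℕ => Bcoef (k+1) * (x/2)^(2*(k+1)+1)) :=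
    (summable_nat_add_iff (f := fun k : ℕ => Bcoef k * (x/2)^(2*k+1)) 1).mpr (summable_B x)
  have hA' : Summable (fun k : ℕ => 4 * Acoef (k+1) * (x/2)^(2*(k+1)+1)) :=
    (((summable_nat_add_iff (f := fun k : ℕ => Acoef k * (x/2)^(2*k)) 1).mpr (summable_A x)).mul_left (2*x)).congr (fun k => by ring)
  have hC' : Summable (fun k : ℕ => 4 * Ccoef k * (x/2)^(2*(k+1)+1)) :=
    ((summable_C x).mul_left (2*x)).congr (fun k => by ring)
  have h2 : 2*x*(∑' k : ℕ, Acoef k * (x/2)^(2*k)) = ∑' k : ℕ, 4 * Acoef k * (x/2)^(2*k+1) := by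
    rw [← tsum_mul_left]; exact tsum_congr fun k => by ring
  have h3 : 2*x*(∑' k : ℕ, Ccoef k * (x/2)^(2*k+2)) = ∑' k : ℕ, 4 * Ccoef k * (x/2)^(2*(k+1)+1) := by
    rw [← tsum_mul_left]; exact tsum_congr fun k => by ring
  rw [h2, h3]
  have h4A : Summable (fun k : ℕ => 4 * Acoef k * (x/2)^(2*k+1)) :=
    ((summable_A x).mul_left (2*x)).congr (fun k => by ring)
  rw [Summable.tsum_eq_zero_add (summable_O x), Summable.tsum_eq_zero_add (summable_B x),
    Summable.tsum_eq_zero_add h4A]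
  have h5 : ∑' k : ℕ, Ocoef (k+1) * (x/2)^(2*(k+1)+1)
      = ((∑' k : ℕ, Bcoef (k+1) * (x/2)^(2*(k+1)+1))
        + ∑' k : ℕ, 4 * Acoef (k+1) * (x/2)^(2*(k+1)+1))
        + ∑' k : ℕ, 4 * Ccoef k * (x/2)^(2*(k+1)+1) := by
    rw [← Summable.tsum_add hB' hA', ← Summable.tsum_add (hB'.add hA') hC']
    refine tsum_congr fun k => ?_
    show (Bcoef (k+1) + 4 * Acoef (k+1) + 4 * Ccoef k) * _ = _
    ring
  rw [h5]
  have hO0 : Ocoef 0 = Bcoef 0 + 4 * Acoef 0 := rfl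
  rw [hO0]
  ring

lemma even_lt (x : ℝ) (hx : 0 < x) :
    ∑' k : ℕ, Ecoef k * (x/2)^(2*k) < 4/Real.pi * Real.cosh (2*x) := by
  rw [Real.cosh_eq_tsum, ← tsum_mul_left]
  have hpow : ∀ k : ℕ, (2*x)^(2*k) = 16^k * (x/2)^(2*k) := by
    intro k
    rw [show (2*x) = 4*(x/2) from by ring, mul_pow, show ((4:ℝ))^(2*k) = 16^k from by
      rw [pow_mul]; norm_num]
  apply Summable.tsum_lt_tsum_of_nonneg
  · intro k
    have := Ecoef_nonneg k
    positivity
  · intro k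
    rw [hpow k]
    calc Ecoef k * (x/2)^(2*k) ≤ ((4/Real.pi) * 16^k / ((2*k)! : ℝ)) * (x/2)^(2*k) :=
          mul_le_mul_of_nonneg_right (Ecoef_le_pi k) (by positivity)
      _ = 4/Real.pi * (16^k * (x/2)^(2*k) / ((2*k)! : ℝ)) := by ring
  · show Ecoef 0 * (x/2)^(2*0) < 4/Real.pi * ((2*x)^(2*0) / ((2*0)! : ℝ))
    norm_num [show Ecoef 0 = 1 from rfl]
    exact one_lt_four_div_pi
  · exact ((Real.hasSum_cosh (2*x)).summable).mul_left _

lemma odd_le (x : ℝ) (hx : 0 < x) :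
    ∑' k : ℕ, Ocoef k * (x/2)^(2*k+1) ≤ 4/Real.pi * Real.sinh (2*x) := by
  rw [Real.sinh_eq_tsum, ← tsum_mul_left]
  apply Summable.tsum_le_tsum _ (summable_O x) (((Real.hasSum_sinh (2*x)).summable).mul_left _)
  intro k
  have hpow : (2*x)^(2*k+1) = 4^(2*k+1) * (x/2)^(2*k+1) := by
    rw [show (2*x) = 4*(x/2) from by ring, mul_pow]
  rw [hpow]
  calc Ocoef k * (x/2)^(2*k+1) ≤ ((4/Real.pi) * 4^(2*k+1) / ((2*k+1)! : ℝ)) * (x/2)^(2*k+1) :=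
        mul_le_mul_of_nonneg_right (Ocoef_le_pi k) (by positivity)
    _ = 4/Real.pi * (4^(2*k+1) * (x/2)^(2*k+1) / ((2*k+1)! : ℝ)) := by ring

theorem key_ineq (x : ℝ) (hx : 0 < x) :
    (besselI0 x + besselI1 x) * (besselI0 x + 2*x*(besselI0 x + besselI1 x))
      < 4/Real.pi * Real.exp (2*x) := by
  have expand : (besselI0 x + besselI1 x) * (besselI0 x + 2*x*(besselI0 x + besselI1 x))
      = (besselI0 x * besselI0 x + 4*x*(besselI0 x * besselI1 x))
        + (besselI0 x * besselI1 x + 2*x*(besselI0 x * besselI0 x) + 2*x*(besselI1 x * besselI1 x)) := by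
    ring
  rw [expand, even_part_eq, odd_part_eq]
  have h := add_lt_add_of_lt_of_le (even_lt x hx) (odd_le x hx)
  calc (∑' k : ℕ, Ecoef k * (x/2)^(2*k)) + ∑' k : ℕ, Ocoef k * (x/2)^(2*k+1)
      < 4/Real.pi * Real.cosh (2*x) + 4/Real.pi * Real.sinh (2*x) := h
    _ = 4/Real.pi * Real.exp (2*x) := by rw [← mul_add, Real.cosh_add_sinh]

/-- the termwise derivative series of besselI1 -/
noncomputable def DI1 (x : ℝ) : ℝ :=
  ∑' m : ℕ, ((2*m+1 : ℕ) : ℝ) * (x/2)^(2*m) / (2 * ((m)! : ℝ) * ((m+1)! : ℝ))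

lemma summable_DI0_terms (x : ℝ) :
    Summable (fun m : ℕ => |(m:ℝ) * (x/2)^(2*m-1) / ((m)! : ℝ)^2|) := by
  rw [← summable_nat_add_iff 1]
  refine Summable.of_nonneg_of_le (fun m => abs_nonneg _) (fun m => ?_)
    ((Real.summable_pow_div_factorial (x^2/4)).mul_left (|x|/2))
  have he : 2*(m+1)-1 = 2*m+1 := by omega
  rw [he, abs_div, abs_mul, abs_pow,
    show (2*m+1) = 2*m+1 from rfl, pow_succ, pow_mul, sq_abs,
    show (x/2)^2 = x^2/4 from by ring,
    abs_of_nonneg (by positivity : (0:ℝ) ≤ ((m+1)! : ℝ)^2)]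
  have h1 : |((m:ℝ)+1)| = (m:ℝ)+1 := abs_of_nonneg (by positivity)
  push_cast
  rw [h1]
  have hfact : ((m:ℝ)+1) * ((m)! : ℝ) ≤ ((m+1)! : ℝ)^2 := by
    rw [fact_succ_cast m]
    nlinarith [one_le_fact m, one_le_fact (m+1), fact_succ_cast m, (by positivity : (0:ℝ) ≤ (m:ℝ)),
      mul_pos (by positivity : (0:ℝ) < (m:ℝ)+1) (by positivity : (0:ℝ) < ((m)! : ℝ))]
  have habs : |x/2| = |x|/2 := by rw [abs_div]; norm_num
  calc ((m:ℝ)+1) * ((x^2/4)^m * |x/2|) / ((m+1)! : ℝ)^2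
      ≤ ((m:ℝ)+1) * ((x^2/4)^m * (|x|/2)) / (((m:ℝ)+1) * ((m)! : ℝ)) := by
        rw [habs]; gcongr
    _ = |x|/2 * ((x^2/4)^m / ((m)! : ℝ)) := by
        have : (m:ℝ)+1 ≠ 0 := by positivity
        field_simp

lemma summable_DI1_terms (x : ℝ) :
    Summable (fun m : ℕ => |((2*m+1 : ℕ) : ℝ) * (x/2)^(2*m) / (2 * ((m)! : ℝ) * ((m+1)! : ℝ))|) := by
  refine Summable.of_nonneg_of_le (fun m => abs_nonneg _) (fun m => ?_)
    (Real.summable_pow_div_factorial (x^2/4))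
  rw [abs_div, abs_mul, abs_pow, pow_mul, sq_abs, show (x/2)^2 = x^2/4 from by ring,
    abs_of_nonneg (by positivity : (0:ℝ) ≤ 2 * ((m)! : ℝ) * ((m+1)! : ℝ)),
    abs_of_nonneg (by positivity : (0:ℝ) ≤ ((2*m+1 : ℕ) : ℝ))]
  have hfact : ((2*m+1 : ℕ) : ℝ) * ((m)! : ℝ) ≤ 2 * ((m)! : ℝ) * ((m+1)! : ℝ) := by
    have h1 : ((m:ℝ)+1) ≤ ((m+1)! : ℝ) := by
      exact_mod_cast Nat.self_le_factorial (m+1)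
    push_cast
    nlinarith [one_le_fact m, (by positivity : (0:ℝ) ≤ (m:ℝ))]
  calc ((2*m+1 : ℕ) : ℝ) * (x^2/4)^m / (2 * ((m)! : ℝ) * ((m+1)! : ℝ))
      ≤ ((2*m+1 : ℕ) : ℝ) * (x^2/4)^m / (((2*m+1 : ℕ) : ℝ) * ((m)! : ℝ)) := by
        gcongr
    _ = (x^2/4)^m / ((m)! : ℝ) := by
        have : ((2*m+1 : ℕ) : ℝ) ≠ 0 := by positivity
        field_simp

lemma hasDerivAt_I0 (x : ℝ) : HasDerivAt besselI0 (∑' m : ℕ, (m:ℝ) * (x/2)^(2*m-1) / ((m)! : ℝ)^2) x := by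
  set R : ℝ := |x| + 1 with hR
  have hxmem : x ∈ Set.Ioo (-R) R := by
    constructor <;> [nlinarith [abs_nonneg x, neg_abs_le x]; nlinarith [le_abs_self x]]
  have hu : Summable (fun m : ℕ => |(m:ℝ) * (R/2)^(2*m-1) / ((m)! : ℝ)^2|) := summable_DI0_terms R
  have H := hasDerivAt_tsum_of_isPreconnected
    (u := fun m : ℕ => |(m:ℝ) * (R/2)^(2*m-1) / ((m)! : ℝ)^2|)
    (g := fun (m : ℕ) (y : ℝ) => (y/2)^(2*m)/((m)! : ℝ)^2)
    (g' := fun (m : ℕ) (y : ℝ) => (m:ℝ)*(y/2)^(2*m-1)/((m)! : ℝ)^2)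
    (y₀ := x) (y := x) (t := Set.Ioo (-R) R)
    hu isOpen_Ioo (convex_Ioo _ _).isPreconnected
    (fun m y _ => ?_) (fun m y hy => ?_) hxmem (summable_I0 x) hxmem
  · exact H
  · -- HasDerivAt of each term
    have h1 : HasDerivAt (fun y : ℝ => y/2) (1/2) y := (hasDerivAt_id y).div_const 2
    have h2 := (h1.pow (2*m)).div_const (((m)! : ℝ)^2)
    refine h2.congr_deriv ?_
    push_cast
    ring
  · -- bound
    have hy' : |y| ≤ R := by
      rw [abs_le]
      constructor
      · linarith [hy.1]
      · linarith [hy.2]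
    have hR0 : (0:ℝ) < R := by positivity
    show ‖(m:ℝ)*(y/2)^(2*m-1)/((m)! : ℝ)^2‖ ≤ |(m:ℝ) * (R/2)^(2*m-1) / ((m)! : ℝ)^2|
    rw [Real.norm_eq_abs,
      abs_of_nonneg (by positivity : (0:ℝ) ≤ (m:ℝ) * (R/2)^(2*m-1) / ((m)! : ℝ)^2),
      abs_div, abs_mul, abs_pow,
      abs_of_nonneg (by positivity : (0:ℝ) ≤ (m:ℝ)),
      abs_of_nonneg (by positivity : (0:ℝ) ≤ ((m)! : ℝ)^2)]
    gcongr
    rw [abs_div]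
    norm_num
    rw [div_le_div_iff_of_pos_right (by norm_num : (0:ℝ) < 2)]
    exact hy'

lemma hasDerivAt_besselI0 (x : ℝ) : HasDerivAt besselI0 (besselI1 x) x := by
  have h := hasDerivAt_I0 x
  have he : (∑' m : ℕ, (m:ℝ) * (x/2)^(2*m-1) / ((m)! : ℝ)^2) = besselI1 x := by
    have hs : Summable (fun m : ℕ => (m:ℝ) * (x/2)^(2*m-1)/((m)!:ℝ)^2) :=
      (summable_DI0_terms x).of_abs
    rw [Summable.tsum_eq_zero_add hs, besselI1]
    have h0 : ((0:ℕ):ℝ) * (x/2)^(2*0-1) / ((0:ℕ)! : ℝ)^2 = 0 := by norm_num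
    rw [h0, zero_add]
    refine tsum_congr fun m => ?_
    have he2 : 2*(m+1)-1 = 2*m+1 := by omega
    rw [he2, fact_succ_cast m]
    have h1 : ((m)! : ℝ) ≠ 0 := by positivity
    have h2 : ((m:ℝ)+1) ≠ 0 := by positivity
    push_cast
    field_simp
  rwa [he] at h

lemma hasDerivAt_besselI1 (x : ℝ) : HasDerivAt besselI1 (DI1 x) x := by
  set R : ℝ := |x| + 1 with hR
  have hxmem : x ∈ Set.Ioo (-R) R := by
    constructor <;> [nlinarith [abs_nonneg x, neg_abs_le x]; nlinarith [le_abs_self x]]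
  have hu : Summable (fun m : ℕ => |((2*m+1 : ℕ) : ℝ) * (R/2)^(2*m) / (2 * ((m)! : ℝ) * ((m+1)! : ℝ))|) :=
    summable_DI1_terms R
  have H := hasDerivAt_tsum_of_isPreconnected
    (u := fun m : ℕ => |((2*m+1 : ℕ) : ℝ) * (R/2)^(2*m) / (2 * ((m)! : ℝ) * ((m+1)! : ℝ))|)
    (g := fun (m : ℕ) (y : ℝ) => (y/2)^(2*m+1)/(((m)! : ℝ) * ((m+1)! : ℝ)))
    (g' := fun (m : ℕ) (y : ℝ) => ((2*m+1 : ℕ) : ℝ) * (y/2)^(2*m) / (2 * ((m)! : ℝ) * ((m+1)! : ℝ)))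
    (y₀ := x) (y := x) (t := Set.Ioo (-R) R)
    hu isOpen_Ioo (convex_Ioo _ _).isPreconnected
    (fun m y _ => ?_) (fun m y hy => ?_) hxmem (summable_I1 x) hxmem
  · exact H
  · have h1 : HasDerivAt (fun y : ℝ => y/2) (1/2) y := (hasDerivAt_id y).div_const 2
    have h2 := (h1.pow (2*m+1)).div_const (((m)! : ℝ) * ((m+1)! : ℝ))
    refine h2.congr_deriv ?_
    have he2 : 2*m+1-1 = 2*m := by omega
    rw [he2]
    push_cast
    ring
  · have hy' : |y| ≤ R := by
      rw [abs_le]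
      constructor
      · linarith [hy.1]
      · linarith [hy.2]
    have hR0 : (0:ℝ) < R := by positivity
    show ‖((2*m+1 : ℕ) : ℝ) * (y/2)^(2*m)/(2 * ((m)! : ℝ) * ((m+1)! : ℝ))‖
        ≤ |((2*m+1 : ℕ) : ℝ) * (R/2)^(2*m) / (2 * ((m)! : ℝ) * ((m+1)! : ℝ))|
    rw [Real.norm_eq_abs,
      abs_of_nonneg (by positivity : (0:ℝ) ≤ ((2*m+1 : ℕ) : ℝ) * (R/2)^(2*m) / (2 * ((m)! : ℝ) * ((m+1)! : ℝ))),
      abs_div, abs_mul, abs_pow,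
      abs_of_nonneg (by positivity : (0:ℝ) ≤ ((2*m+1 : ℕ) : ℝ)),
      abs_of_nonneg (by positivity : (0:ℝ) ≤ 2 * ((m)! : ℝ) * ((m+1)! : ℝ))]
    gcongr
    rw [abs_div]
    norm_num
    rw [div_le_div_iff_of_pos_right (by norm_num : (0:ℝ) < 2)]
    exact hy'

lemma DI1_identity (x : ℝ) : x * DI1 x + besselI1 x = x * besselI0 x := by
  rw [DI1, besselI1, besselI0, ← tsum_mul_left, ← tsum_mul_left,
    ← Summable.tsum_add (((summable_DI1_terms x).of_abs).mul_left x) (summable_I1 x)]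
  refine tsum_congr fun m => ?_
  rw [fact_succ_cast m]
  have h1 : ((m)! : ℝ) ≠ 0 := by positivity
  have h2 : ((m:ℝ)+1) ≠ 0 := by positivity
  have h3 : (x/2)^(2*m+1) = (x/2)^(2*m) * (x/2) := pow_succ _ _
  rw [h3]
  push_cast
  field_simp
  ring

noncomputable def Lder (x : ℝ) : ℝ :=
  Real.exp (-x/2) * (besselI0 (x/2) + besselI1 (x/2)) / 2

lemma hasDerivAt_L (x : ℝ) : HasDerivAt LhalfNeg (Lder x) x := by
  have hhalf : HasDerivAt (fun y : ℝ => y/2) (1/2) x := (hasDerivAt_id x).div_const 2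
  have hI0 : HasDerivAt (fun y : ℝ => besselI0 (y/2)) (besselI1 (x/2) * (1/2)) x :=
    (hasDerivAt_besselI0 (x/2)).comp (h := fun y : ℝ => y/2) x hhalf
  have hI1 : HasDerivAt (fun y : ℝ => besselI1 (y/2)) (DI1 (x/2) * (1/2)) x :=
    (hasDerivAt_besselI1 (x/2)).comp (h := fun y : ℝ => y/2) x hhalf
  have hneg : HasDerivAt (fun y : ℝ => -y/2) (-1/2) x := by
    simpa using ((hasDerivAt_id x).neg.div_const 2)
  have hexp : HasDerivAt (fun y : ℝ => Real.exp (-y/2)) (Real.exp (-x/2) * (-1/2)) x :=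
    (Real.hasDerivAt_exp (-x/2)).comp (h := fun y : ℝ => -y/2) x hneg
  have h1 : HasDerivAt (fun y : ℝ => (1+y)) (1:ℝ) x := by
    simpa using (hasDerivAt_id x).const_add 1
  have hterm1 : HasDerivAt (fun y : ℝ => (1+y) * besselI0 (y/2))
      (1 * besselI0 (x/2) + (1+x) * (besselI1 (x/2) * (1/2))) x := h1.mul hI0
  have hterm2 : HasDerivAt (fun y : ℝ => y * besselI1 (y/2))
      (1 * besselI1 (x/2) + x * (DI1 (x/2) * (1/2))) x := (hasDerivAt_id x).mul hI1
  have hN := hterm1.add hterm2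
  have hL := hexp.mul hN
  have : LhalfNeg = fun y : ℝ => Real.exp (-y/2) * ((1+y) * besselI0 (y/2) + y * besselI1 (y/2)) := rfl
  rw [this]
  refine hL.congr_deriv ?_
  have hid := DI1_identity (x/2)
  rw [Lder, Pi.add_apply]
  linear_combination (Real.exp (-x/2)) * hid

noncomputable def Gfun (ρ : ℝ) : ℝ := ρ - Real.pi/4 * (LhalfNeg ρ)^2

lemma hasDerivAt_G (ρ : ℝ) :
    HasDerivAt Gfun (1 - Real.pi/2 * (LhalfNeg ρ * Lder ρ)) ρ := by
  have h1 := ((hasDerivAt_L ρ).pow 2).const_mul (Real.pi/4)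
  have h2 := (hasDerivAt_id ρ).sub h1
  refine h2.congr_deriv ?_
  push_cast
  ring

lemma Gderiv_pos (ρ : ℝ) (hρ : 0 < ρ) :
    0 < 1 - Real.pi/2 * (LhalfNeg ρ * Lder ρ) := by
  have hk := key_ineq (ρ/2) (by linarith)
  set a := besselI0 (ρ/2)
  set b := besselI1 (ρ/2)
  have hee : Real.exp (-ρ/2) * Real.exp (-ρ/2) = Real.exp (-ρ) := by
    rw [← Real.exp_add]; ring_nf
  have hLL : LhalfNeg ρ * Lder ρ
      = Real.exp (-ρ) * (((1+ρ)*a + ρ*b) * (a+b)) / 2 := by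
    rw [LhalfNeg, Lder]
    have : Real.exp (-ρ/2) * ((1 + ρ) * a + ρ * b) * (Real.exp (-ρ/2) * (a + b) / 2)
        = (Real.exp (-ρ/2) * Real.exp (-ρ/2)) * (((1+ρ)*a + ρ*b) * (a+b)) / 2 := by ring
    rw [this, hee]
  rw [hLL]
  have hprod : ((1+ρ)*a + ρ*b) * (a+b) < 4/Real.pi * Real.exp ρ := by
    have he : (2:ℝ)*(ρ/2) = ρ := by ring
    rw [he] at hk
    calc ((1+ρ)*a + ρ*b) * (a+b) = (a + b) * (a + ρ*(a+b)) := by ring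
      _ < 4/Real.pi * Real.exp ρ := hk
  have hpos : (0:ℝ) < Real.exp (-ρ) := Real.exp_pos _
  have hπ : (0:ℝ) < Real.pi := Real.pi_pos
  have h2 : Real.pi/2 * (Real.exp (-ρ) * (((1+ρ)*a + ρ*b) * (a+b)) / 2)
      < Real.pi/2 * (Real.exp (-ρ) * (4/Real.pi * Real.exp ρ) / 2) := by
    gcongr
  have h3 : Real.pi/2 * (Real.exp (-ρ) * (4/Real.pi * Real.exp ρ) / 2) = 1 := by
    rw [Real.exp_neg]
    field_simp
    ring
  linarith

theorem Ffun_unique_min (ζ : ℝ) (hζ : 0 < ζ) :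
    (∀ ν : ℝ, 0 ≤ ν → ν ≠ 0 → Ffun ζ 0 < Ffun ζ ν) ∧
    (∀ ν : ℝ, 0 < ν → 0 < deriv (Ffun ζ) ν) := by
  have hFeq : Ffun ζ = fun ν : ℝ => Gfun (ν^2 + ζ^2) := rfl
  have hinner : ∀ ν : ℝ, HasDerivAt (fun ν : ℝ => ν^2 + ζ^2) (2*ν) ν := by
    intro ν
    have := ((hasDerivAt_pow 2 ν).add_const (ζ^2))
    refine this.congr_deriv ?_
    push_cast
    ring
  have hFd : ∀ ν : ℝ, HasDerivAt (Ffun ζ)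
      ((1 - Real.pi/2 * (LhalfNeg (ν^2+ζ^2) * Lder (ν^2+ζ^2))) * (2*ν)) ν := by
    intro ν
    rw [hFeq]
    exact (hasDerivAt_G (ν^2+ζ^2)).comp ν (hinner ν)
  constructor
  · intro ν hν0 hνne
    have hν : 0 < ν := lt_of_le_of_ne hν0 (Ne.symm hνne)
    have hmono : StrictMonoOn Gfun (Set.Ici (ζ^2)) := by
      apply strictMonoOn_of_deriv_pos (convex_Ici _)
      · exact (Differentiable.continuous (fun ρ => (hasDerivAt_G ρ).differentiableAt)).continuousOn
      · intro ρ hρ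
        rw [interior_Ici] at hρ
        rw [(hasDerivAt_G ρ).deriv]
        exact Gderiv_pos ρ (by nlinarith [Set.mem_Ioi.mp hρ])
    have h1 : Ffun ζ 0 = Gfun (ζ^2) := by
      rw [hFeq]
      norm_num
    have h2 : Ffun ζ ν = Gfun (ν^2 + ζ^2) := by rw [hFeq]
    rw [h1, h2]
    apply hmono (Set.mem_Ici.mpr le_rfl) (Set.mem_Ici.mpr (by nlinarith))
    nlinarith
  · intro ν hν
    rw [(hFd ν).deriv]
    have hρ : 0 < ν^2 + ζ^2 := by positivity
    have := Gderiv_pos (ν^2+ζ^2) hρ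
    have h2ν : 0 < 2*ν := by linarith
    positivity
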